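/- In a right-angled Artin group G with its canonical median group structure, if x, y ∈ G and m ≥ 1 satisfy xᵐ = yᵐ, then x = y. Consequently Z_G(wᵐ) = Z_G(w) for all w ∈ G and m ≠ 0. -/

import Mathlib

namespace ArtinMedian

/-- The commutator relations of a right-angled Artin group on vertex set `V`
with commuting pairs given by `E`. -/
def raagRels {V : Type*} (E : V → V → Prop) : Set (FreeGroup V) :=
  {r | ∃ s t : V, s ≠ t ∧ E s t ∧
    r = FreeGroup.of s * FreeGroup.of t * (FreeGroup.of s)⁻¹ * (FreeGroup.of t)⁻¹}

namespace RAAG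

open List Relation

variable {V : Type*} (E : V → V → Prop)

/-- Letters: a vertex together with a sign. -/
abbrev L (V : Type*) := V × Bool

/-- Formal inverse of a letter. -/
def linv (a : L V) : L V := (a.1, !a.2)

@[simp] lemma linv_linv (a : L V) : linv (linv a) = a := by
  cases a with | mk s b => cases b <;> rfl

@[simp] lemma linv_fst (a : L V) : (linv a).1 = a.1 := rfl

/-- Independence of letters: distinct commuting vertices. -/
def Ind (a b : L V) : Prop := a.1 ≠ b.1 ∧ (E a.1 b.1 ∨ E b.1 a.1)

variable {E}

lemma Ind.symm {a b : L V} (h : Ind E a b) : Ind E b a :=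
  ⟨fun hh => h.1 hh.symm, h.2.symm⟩

lemma Ind.ne {a b : L V} (h : Ind E a b) : a ≠ b := fun hh => h.1 (by rw [hh])

@[simp] lemma ind_linv_left {a b : L V} : Ind E (linv a) b ↔ Ind E a b := Iff.rfl

@[simp] lemma ind_linv_right {a b : L V} : Ind E a (linv b) ↔ Ind E a b := Iff.rfl

lemma ind_irrefl (a : L V) : ¬ Ind E a a := fun h => h.1 rfl

lemma not_ind_linv_self (a : L V) : ¬ Ind E a (linv a) := fun h => h.1 rfl

lemma ne_of_fst_ne {a b : L V} (h : a.1 ≠ b.1) : a ≠ b := fun hh => h (by rw [hh])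

variable (E)

/-- One swap of adjacent independent letters. -/
def Step (w w' : List (L V)) : Prop :=
  ∃ A c d B, Ind E c d ∧ w = A ++ c :: d :: B ∧ w' = A ++ d :: c :: B

/-- Shuffle equivalence of words. -/
def Tr : List (L V) → List (L V) → Prop := Relation.ReflTransGen (Step E)

variable {E}

lemma Step.symm' {w w' : List (L V)} (h : Step E w w') : Step E w' w := by
  obtain ⟨A, c, d, B, hI, h1, h2⟩ := h
  exact ⟨A, d, c, B, hI.symm, h2, h1⟩

lemma tr_refl (w : List (L V)) : Tr E w w := ReflTransGen.refl

lemma Tr.trans' {u v w : List (L V)} (h1 : Tr E u v) (h2 : Tr E v w) : Tr E u w :=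
  ReflTransGen.trans h1 h2

lemma tr_of_step {w w' : List (L V)} (h : Step E w w') : Tr E w w' :=
  ReflTransGen.single h

lemma Tr.symm' {w w' : List (L V)} (h : Tr E w w') : Tr E w' w := by
  induction h with
  | refl => exact tr_refl _
  | tail _ h2 ih => exact ((tr_of_step h2.symm').trans' ih)

lemma Step.perm {w w' : List (L V)} (h : Step E w w') : w.Perm w' := by
  obtain ⟨A, c, d, B, _, h1, h2⟩ := h
  subst h1; subst h2
  exact (List.Perm.append_left A (List.Perm.swap d c B))

lemma Tr.perm {w w' : List (L V)} (h : Tr E w w') : w.Perm w' := by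
  induction h with
  | refl => exact List.Perm.refl _
  | tail _ h2 ih => exact ih.trans h2.perm

lemma Tr.length_eq {w w' : List (L V)} (h : Tr E w w') : w.length = w'.length :=
  h.perm.length_eq

lemma Step.append_left {w w' : List (L V)} (p : List (L V)) (h : Step E w w') :
    Step E (p ++ w) (p ++ w') := by
  obtain ⟨A, c, d, B, hI, h1, h2⟩ := h
  exact ⟨p ++ A, c, d, B, hI, by simp [h1], by simp [h2]⟩

lemma Step.append_right {w w' : List (L V)} (q : List (L V)) (h : Step E w w') :
    Step E (w ++ q) (w' ++ q) := by
  obtain ⟨A, c, d, B, hI, h1, h2⟩ := h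
  exact ⟨A, c, d, B ++ q, hI, by simp [h1], by simp [h2]⟩

lemma Tr.append_left {w w' : List (L V)} (p : List (L V)) (h : Tr E w w') :
    Tr E (p ++ w) (p ++ w') := by
  induction h with
  | refl => exact tr_refl _
  | tail _ h2 ih => exact ih.tail (h2.append_left p)

lemma Tr.append_right {w w' : List (L V)} (q : List (L V)) (h : Tr E w w') :
    Tr E (w ++ q) (w' ++ q) := by
  induction h with
  | refl => exact tr_refl _
  | tail _ h2 ih => exact ih.tail (h2.append_right q)

lemma Tr.append {u u' v v' : List (L V)} (h1 : Tr E u u') (h2 : Tr E v v') :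
    Tr E (u ++ v) (u' ++ v') :=
  (h1.append_right v).trans' (h2.append_left u')

lemma Tr.cons (a : L V) {w w' : List (L V)} (h : Tr E w w') : Tr E (a :: w) (a :: w') := by
  simpa using h.append_left [a]

/-- Move a letter left across a block of independent letters. -/
lemma swap_all {p : List (L V)} {a : L V} (hp : ∀ b ∈ p, Ind E b a) (q : List (L V)) :
    Tr E (p ++ a :: q) (a :: (p ++ q)) := by
  induction p with
  | nil => simp [tr_refl]
  | cons e p ih =>
    have h1 : Tr E (p ++ a :: q) (a :: (p ++ q)) := ih (fun b hb => hp b (mem_cons_of_mem _ hb))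
    have h2 : Tr E (e :: (p ++ a :: q)) (e :: a :: (p ++ q)) := h1.cons e
    have h3 : Step E (e :: a :: (p ++ q)) (a :: e :: (p ++ q)) :=
      ⟨[], e, a, p ++ q, hp e (mem_cons_self), rfl, rfl⟩
    simpa using h2.trans' (tr_of_step h3)

/-- Move a letter right across a block of independent letters. -/
lemma swap_all_right {q : List (L V)} {a : L V} (hq : ∀ b ∈ q, Ind E b a) (p : List (L V)) :
    Tr E (p ++ a :: q) ((p ++ q) ++ [a]) := by
  induction q generalizing p with
  | nil => simp [tr_refl]
  | cons e q ih =>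
    have h3 : Step E (p ++ a :: e :: q) (p ++ e :: a :: q) :=
      ⟨p, a, e, q, (hq e (mem_cons_self)).symm, rfl, rfl⟩
    have h1 : Tr E ((p ++ [e]) ++ a :: q) (((p ++ [e]) ++ q) ++ [a]) :=
      ih (fun b hb => hq b (mem_cons_of_mem _ hb)) (p ++ [e])
    have := (tr_of_step h3).trans' (by simpa using h1)
    simpa using this

lemma Tr.reverse {w w' : List (L V)} (h : Tr E w w') : Tr E w.reverse w'.reverse := by
  induction h with
  | refl => exact tr_refl _
  | tail _ h2 ih =>
    refine ih.trans' ?_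
    obtain ⟨A, c, d, B, hI, h1, h2'⟩ := h2
    subst h1; subst h2'
    refine tr_of_step ⟨B.reverse, d, c, A.reverse, hI.symm, by simp, by simp⟩

variable {V : Type*} {E : V → V → Prop}

/-- Splitting a two-marked-element decomposition against a one-marked-element one. -/
lemma split4 {X : Type*} {A B p q : List X} {c d a : X}
    (h : A ++ c :: d :: B = p ++ a :: q) :
    (∃ t, p = A ++ c :: d :: t ∧ B = t ++ a :: q) ∨
    (A = p ∧ c = a ∧ q = d :: B) ∨
    (p = A ++ [c] ∧ d = a ∧ q = B) ∨
    (∃ t, A = p ++ a :: t ∧ q = t ++ c :: d :: B) := by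
  rcases List.append_eq_append_iff.1 h with ⟨t, h1, h2⟩ | ⟨t, h1, h2⟩
  · -- p = A ++ t, c :: d :: B = t ++ a :: q
    match t, h2 with
    | [], h2 =>
      simp at h2 h1
      exact Or.inr (Or.inl ⟨h1.symm, h2.1, h2.2.symm⟩)
    | [x], h2 =>
      simp at h2
      obtain ⟨hcx, hda, hq⟩ := h2
      exact Or.inr (Or.inr (Or.inl ⟨by rw [h1, hcx], hda, hq.symm⟩))
    | x :: y :: t, h2 =>
      simp at h2
      obtain ⟨hcx, hdy, hB⟩ := h2
      refine Or.inl ⟨t, ?_, hB⟩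
      rw [h1, hcx, hdy]
  · -- A = p ++ t, a :: q = t ++ c :: d :: B
    match t, h2 with
    | [], h2 =>
      simp at h1
      cases h2
      exact Or.inr (Or.inl ⟨h1, rfl, rfl⟩)
    | x :: t, h2 =>
      simp at h2
      obtain ⟨hax, hqt⟩ := h2
      exact Or.inr (Or.inr (Or.inr ⟨t, by rw [h1, hax], hqt⟩))

/-- First-occurrence extraction: if `a :: u ~ w` then the (suitably chosen) occurrence of `a`
in `w` can be moved to the front. -/
lemma firstocc {a : L V} {u w : List (L V)} (h : Tr E (a :: u) w) :
    ∃ p q, w = p ++ a :: q ∧ (∀ b ∈ p, Ind E b a) ∧ Tr E (p ++ q) u := by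
  induction h with
  | refl => exact ⟨[], u, rfl, by simp, tr_refl _⟩
  | tail _ hstep ih =>
    obtain ⟨p, q, hw, hp, hpq⟩ := ih
    obtain ⟨A, c, d, B, hI, h1, h2⟩ := hstep
    rw [hw] at h1
    rcases split4 h1.symm with ⟨t, ht1, ht2⟩ | ⟨hA, hc, hq⟩ | ⟨hp', hd, hq⟩ | ⟨t, ht1, ht2⟩
    · -- swap inside p
      refine ⟨A ++ d :: c :: t, q, by rw [h2, ht2]; simp, ?_, ?_⟩
      · intro b hb
        apply hp
        rw [ht1]
        simp at hb ⊢
        tauto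
      · refine (Tr.trans' ?_ hpq)
        rw [ht1]
        have : Step E (A ++ d :: c :: (t ++ q)) (A ++ c :: d :: (t ++ q)) :=
          ⟨A, d, c, t ++ q, hI.symm, rfl, rfl⟩
        simpa using tr_of_step this
    · -- swap starts at marked position : c = a, moves a right
      subst hc
      refine ⟨p ++ [d], B, by rw [h2, hA]; simp, ?_, ?_⟩
      · intro b hb
        rcases mem_append.1 hb with hb | hb
        · exact hp b hb
        · simp at hb; subst hb; exact hI.symm
      · refine (Tr.trans' ?_ hpq)
        rw [hq]
        simp [tr_refl]
    · -- d = a : swap moves a left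
      subst hd
      refine ⟨A, c :: B, by rw [h2], ?_, ?_⟩
      · intro b hb
        apply hp
        rw [hp']
        simp [hb]
      · refine (Tr.trans' ?_ hpq)
        rw [hp', hq]
        simp [tr_refl]
    · -- swap inside q
      refine ⟨p, t ++ d :: c :: B, by rw [h2, ht1]; simp, hp, ?_⟩
      refine (Tr.trans' ?_ hpq)
      rw [ht2]
      have : Step E (p ++ (t ++ d :: c :: B)) (p ++ (t ++ c :: d :: B)) :=
        ⟨p ++ t, d, c, B, hI.symm, by simp, by simp⟩
      exact tr_of_step this

/-- Left cancellation for traces. -/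
lemma lcancel {a : L V} {u v : List (L V)} (h : Tr E (a :: u) (a :: v)) : Tr E u v := by
  obtain ⟨p, q, hw, hp, hpq⟩ := firstocc h
  match p, hw with
  | [], hw => cases hw; exact hpq.symm'
  | x :: p, hw =>
    have hx : a = x := by simpa using congrArg (fun l => l.head?) hw
    subst hx
    exact absurd (hp a (by simp)) (ind_irrefl a)

/-- One-letter Levi lemma. -/
lemma levi1 {a b : L V} {u v : List (L V)} (h : Tr E (a :: u) (b :: v)) (hab : a ≠ b) :
    Ind E b a ∧ ∃ z, Tr E u (b :: z) ∧ Tr E v (a :: z) := by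
  obtain ⟨p, q, hw, hp, hpq⟩ := firstocc h
  match p, hw with
  | [], hw => cases hw; exact absurd rfl hab
  | x :: p, hw =>
    have hx : b = x := by simpa using congrArg (fun l => l.head?) hw
    subst hx
    have hv : v = p ++ a :: q := by simpa using hw
    refine ⟨hp b (by simp), p ++ q, ?_, ?_⟩
    · exact (hpq.symm').trans' (tr_refl _)
    · rw [hv]
      exact swap_all (fun c hc => hp c (by simp [hc])) q

/-- Both-ends lemma: if `a` can be pulled to the front and `b ≠ a` to the back,
this can be done simultaneously. -/
lemma both_ends {a b : L V} {w u v : List (L V)} (h1 : Tr E w (a :: u))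
    (h2 : Tr E w (v ++ [b])) (hab : a ≠ b) : ∃ z, Tr E w (a :: (z ++ [b])) := by
  have h3 : Tr E (a :: u) (v ++ [b]) := h1.symm'.trans' h2
  obtain ⟨p, q, hw, hp, -⟩ := firstocc h3
  rcases List.eq_nil_or_concat q with rfl | ⟨q₀, x, rfl⟩
  · exfalso
    have h5 := congrArg List.getLast? hw
    rw [List.getLast?_concat] at h5
    have h6 : p ++ [a] = p ++ a :: [] := by simp
    rw [← h6, List.getLast?_concat] at h5
    exact hab (Option.some.inj h5).symm
  · simp only [List.concat_eq_append] at hw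
    have h5 := congrArg List.getLast? hw
    rw [List.getLast?_concat] at h5
    have h6 : p ++ a :: (q₀ ++ [x]) = (p ++ a :: q₀) ++ [x] := by simp
    rw [h6, List.getLast?_concat] at h5
    obtain rfl : b = x := Option.some.inj h5
    have hv : v = p ++ a :: q₀ := by
      have : v ++ [b] = (p ++ a :: q₀) ++ [b] := by rw [hw]; simp
      exact List.append_cancel_right this
    have h7 : Tr E v (a :: (p ++ q₀)) := by
      rw [hv]; exact swap_all hp q₀
    refine ⟨p ++ q₀, ?_⟩
    have := h2.trans' (h7.append_right [b])
    simpa using this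


section Cancel

variable (E)

/-- `w` contains a cancellable pair (up to shuffling). -/
def HC (w : List (L V)) : Prop := ∃ x u v, Tr E w (u ++ x :: linv x :: v)

/-- Listial form of containing a cancellable pair. -/
def HCL (w : List (L V)) : Prop :=
  ∃ (P Q R : List (L V)) (x : L V), w = P ++ x :: (Q ++ linv x :: R) ∧ ∀ b ∈ Q, Ind E x b

/-- Reduced words. -/
def Red (w : List (L V)) : Prop := ¬ HC E w

variable {E}

lemma hc_tr {w w' : List (L V)} (h : Tr E w w') (h' : HC E w') : HC E w := by
  obtain ⟨x, u, v, h2⟩ := h'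
  exact ⟨x, u, v, h.trans' h2⟩

lemma red_tr {w w' : List (L V)} (h : Tr E w w') (h' : Red E w) : Red E w' :=
  fun hc => h' (hc_tr h hc)

lemma hc_append_right {u : List (L V)} (v : List (L V)) (h : HC E u) : HC E (u ++ v) := by
  obtain ⟨x, U, W, h2⟩ := h
  exact ⟨x, U, W ++ v, by simpa using h2.append_right v⟩

lemma hc_append_left (u : List (L V)) {v : List (L V)} (h : HC E v) : HC E (u ++ v) := by
  obtain ⟨x, U, W, h2⟩ := h
  exact ⟨x, u ++ U, W, by simpa using h2.append_left u⟩

lemma hc_cons (a : L V) {w : List (L V)} (h : HC E w) : HC E (a :: w) := by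
  simpa using hc_append_left [a] h

lemma red_append_left {u v : List (L V)} (h : Red E (u ++ v)) : Red E u :=
  fun hc => h (hc_append_right v hc)

lemma red_append_right {u v : List (L V)} (h : Red E (u ++ v)) : Red E v :=
  fun hc => h (hc_append_left u hc)

lemma red_cons {a : L V} {w : List (L V)} (h : Red E (a :: w)) : Red E w :=
  fun hc => h (hc_cons a hc)

lemma hcl_hc {w : List (L V)} (h : HCL E w) : HC E w := by
  obtain ⟨P, Q, R, x, hw, hq⟩ := h
  refine ⟨x, P, Q ++ R, ?_⟩
  have h1 : Tr E (Q ++ linv x :: R) (linv x :: (Q ++ R)) :=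
    swap_all (fun b hb => show Ind E b (linv x) from (hq b hb).symm) R
  have h2 : Tr E (x :: (Q ++ linv x :: R)) (x :: linv x :: (Q ++ R)) := h1.cons x
  have := h2.append_left P
  rw [hw]
  simpa using this

lemma hcl_step {w w' : List (L V)} (hs : Step E w w') (h : HCL E w) : HCL E w' := by
  obtain ⟨P, Q, R, x, hw, hq⟩ := h
  obtain ⟨A, c, d, B, hI, h1, h2⟩ := hs
  rw [hw] at h1
  rcases split4 h1.symm with ⟨t, ht1, ht2⟩ | ⟨hA, hc, hQ⟩ | ⟨hP, hd, hQ⟩ | ⟨t, ht1, ht2⟩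
  · -- swap inside P
    exact ⟨A ++ d :: c :: t, Q, R, x, by rw [h2, ht2]; simp, hq⟩
  · -- c = x : the swap moves x right
    subst hc
    match Q, hQ with
    | [], hQ =>
      exfalso
      have hd : linv c = d := by simpa using congrArg (fun l => l.head?) hQ
      exact not_ind_linv_self c (hd ▸ hI)
    | e :: Q', hQ =>
      have he : e = d := by simpa using congrArg (fun l => l.head?) hQ
      subst he
      have hB : B = Q' ++ linv c :: R := by
        have := congrArg List.tail hQ
        simp at this
        exact this.symm
      refine ⟨P ++ [e], Q', R, c, by rw [h2, hA, hB]; simp, fun b hb => hq b (by simp [hb])⟩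
  · -- d = x : the swap moves x left
    subst hd
    refine ⟨A, c :: Q, R, d, by rw [h2, ← hQ]; simp, ?_⟩
    intro b hb
    rcases mem_cons.1 hb with rfl | hb
    · exact hI.symm
    · exact hq b hb
  · -- the swap is inside Q ++ linv x :: R
    rcases split4 ht2.symm with ⟨s, hs1, hs2⟩ | ⟨hA', hc', hR⟩ | ⟨hP', hd', hR⟩ | ⟨s, hs1, hs2⟩
    · -- swap inside Q
      refine ⟨P, t ++ d :: c :: s, R, x, by rw [h2, ht1, hs2]; simp, ?_⟩
      intro b hb
      apply hq
      rw [hs1]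
      simp at hb ⊢
      tauto
    · -- c = linv x : swap moves linv x right
      subst hA'
      refine ⟨P, t ++ [d], B, x, ?_, ?_⟩
      · rw [h2, ht1, ← hc']
        simp
      · intro b hb
        rcases mem_append.1 hb with hb | hb
        · exact hq b hb
        · simp at hb
          subst hb
          exact (ind_linv_left).1 (hc' ▸ hI)
    · -- d = linv x : swap moves linv x left
      refine ⟨P, t, c :: B, x, ?_, fun b hb => hq b (by rw [hP']; simp [hb])⟩
      rw [h2, ht1, ← hd']
      simp
    · -- swap inside R
      refine ⟨P, Q, s ++ d :: c :: B, x, by rw [h2, ht1, hs1]; simp, hq⟩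

lemma hcl_tr {z w : List (L V)} (h : Tr E z w) (hz : HCL E z) : HCL E w := by
  induction h with
  | refl => exact hz
  | tail _ h2 ih => exact hcl_step h2 ih

lemma hc_decomp {w : List (L V)} (h : HC E w) : HCL E w := by
  obtain ⟨x, u, v, htr⟩ := h
  exact hcl_tr htr.symm' ⟨u, [], v, x, by simp, by simp⟩

lemma red_nil : Red E ([] : List (L V)) := by
  rintro ⟨x, u, v, htr⟩
  have := htr.length_eq
  simp at this

lemma red_singleton (a : L V) : Red E [a] := by
  rintro ⟨x, u, v, htr⟩
  have := htr.length_eq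
  rcases u with _ | ⟨e, u⟩ <;> simp at this

lemma cons_red {a : L V} {w : List (L V)} (hw : Red E w)
    (hext : ¬ ∃ u, Tr E w (linv a :: u)) : Red E (a :: w) := by
  intro hc
  obtain ⟨P, Q, R, x, hd, hq⟩ := hc_decomp hc
  match P, hd with
  | [], hd =>
    have hax : a = x := by simpa using congrArg (fun l => l.head?) hd
    subst hax
    have hw' : w = Q ++ linv a :: R := by simpa using hd
    refine hext ⟨Q ++ R, ?_⟩
    rw [hw']
    exact swap_all (fun b hb => show Ind E b (linv a) from (hq b hb).symm) R
  | e :: P', hd =>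
    have hw' : w = P' ++ x :: (Q ++ linv x :: R) := by
      have := congrArg List.tail hd
      simpa using this
    exact hw (hcl_hc ⟨P', Q, R, x, hw', hq⟩)

/-- If a concatenation of two reduced words is not reduced, a pair cancels across
the boundary. -/
lemma split_hc {u v : List (L V)} (hu : Red E u) (hv : Red E v) (h : HC E (u ++ v)) :
    ∃ (x : L V) (u' v' : List (L V)), Tr E u (u' ++ [x]) ∧ Tr E v (linv x :: v') := by
  obtain ⟨P, Q, R, x, hd, hq⟩ := hc_decomp h
  rcases List.append_eq_append_iff.1 hd with ⟨t, h1, h2⟩ | ⟨t, h1, h2⟩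
  · -- pair entirely inside v
    exact absurd (hcl_hc ⟨t, Q, R, x, h2, hq⟩) hv
  · -- u = P ++ t
    match t, h2 with
    | [], h2 =>
      exact absurd (hcl_hc ⟨[], Q, R, x, by simpa using h2.symm, hq⟩) hv
    | y :: t', h2 =>
      have hyx : x = y := by simpa using congrArg (fun l => l.head?) h2
      subst hyx
      have h3 : Q ++ linv x :: R = t' ++ v := by simpa using h2
      rcases List.append_eq_append_iff.1 h3 with ⟨s, hs1, hs2⟩ | ⟨s, hs1, hs2⟩
      · -- t' = Q ++ s, linv x :: R = s ++ v
        match s, hs2 with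
        | [], hs2 =>
          refine ⟨x, P ++ Q, R, ?_, ?_⟩
          · rw [h1, hs1]
            simpa using swap_all_right (fun b hb => (hq b hb).symm) P
          · have : v = linv x :: R := by simpa using hs2.symm
            rw [this]
            exact tr_refl _
        | z :: s', hs2 =>
          exfalso
          have hzx : linv x = z := by simpa using congrArg (fun l => l.head?) hs2
          subst hzx
          have hR : R = s' ++ v := by simpa using hs2
          refine hu (hcl_hc ⟨P, Q, s', x, ?_, hq⟩)
          rw [h1, hs1]
          try simp
      · -- Q = t' ++ s, v = s ++ linv x :: R
        refine ⟨x, P ++ t', s ++ R, ?_, ?_⟩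
        · rw [h1]
          have : ∀ b ∈ t', Ind E b x := fun b hb => (hq b (by rw [hs1]; simp [hb])).symm
          simpa using swap_all_right this P
        · rw [hs2]
          refine swap_all (fun b hb => show Ind E b (linv x) from
            (hq b (by rw [hs1]; simp [hb])).symm) R

end Cancel

section Proj

open scoped Classical in
/-- Projection of a word to the letters `a`, `b`. -/
noncomputable def pr (a b : L V) (w : List (L V)) : List (L V) :=
  w.filter (fun c => decide (c = a ∨ c = b))

open scoped Classical

lemma pr_nil (a b : L V) : pr a b ([] : List (L V)) = [] := rfl

lemma pr_cons (a b e : L V) (w : List (L V)) :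
    pr a b (e :: w) = if (e = a ∨ e = b) then e :: pr a b w else pr a b w := by
  by_cases h : e = a ∨ e = b <;> simp [pr, List.filter_cons, h]

lemma pr_append (a b : L V) (u v : List (L V)) :
    pr a b (u ++ v) = pr a b u ++ pr a b v := by
  simp [pr, List.filter_append]

lemma mem_pr {a b x : L V} {w : List (L V)} (h : x ∈ pr a b w) :
    x ∈ w ∧ (x = a ∨ x = b) := by
  have h1 := List.mem_of_mem_filter h
  have h2 := List.of_mem_filter h
  simp at h2
  exact ⟨h1, h2⟩

lemma self_mem_pr_left {a b : L V} {w : List (L V)} (h : a ∈ w) : a ∈ pr a b w := by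
  apply List.mem_filter_of_mem h
  simp

lemma pr_tr {a b : L V} (hab : ¬ Ind E a b) {w w' : List (L V)} (h : Tr E w w') :
    pr a b w = pr a b w' := by
  induction h with
  | refl => rfl
  | tail _ h2 ih =>
    rw [ih]
    obtain ⟨A, c, d, B, hI, h1, h2'⟩ := h2
    subst h1; subst h2'
    rw [pr_append, pr_append, pr_cons, pr_cons, pr_cons, pr_cons]
    by_cases hc : c = a ∨ c = b <;> by_cases hd : d = a ∨ d = b <;>
      simp [hc, hd]
    exfalso
    apply hab
    rcases hc with rfl | rfl <;> rcases hd with rfl | rfl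
    · exact absurd rfl hI.ne
    · exact hI
    · exact hI.symm
    · exact absurd rfl hI.ne

lemma mem_split_first {a : L V} {v : List (L V)} (h : a ∈ v) :
    ∃ v₁ v₂, v = v₁ ++ a :: v₂ ∧ a ∉ v₁ := by
  induction v with
  | nil => simp at h
  | cons e v ih =>
    by_cases hea : e = a
    · exact ⟨[], v, by rw [hea]; rfl, by simp⟩
    · have : a ∈ v := by
        rcases mem_cons.1 h with h | h
        · exact absurd h.symm hea
        · exact h
      obtain ⟨v₁, v₂, hv, hnot⟩ := ih this
      refine ⟨e :: v₁, v₂, by rw [hv]; rfl, ?_⟩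
      simp only [mem_cons, not_or]
      exact ⟨fun hh => hea hh.symm, hnot⟩

/-- Projection reconstruction: words with equal projections onto all dependent pairs
are shuffle equivalent. -/
lemma proj_char : ∀ (u v : List (L V)),
    (∀ a b : L V, ¬ Ind E a b → pr a b u = pr a b v) → Tr E u v := by
  intro u
  induction u with
  | nil =>
    intro v h
    match v with
    | [] => exact tr_refl _
    | e :: v' =>
      exfalso
      have := h e e (ind_irrefl e)
      rw [pr_nil, pr_cons] at this
      simp at this
  | cons a u' ih =>
    intro v h
    have hav : a ∈ v := by
      have h0 := h a a (ind_irrefl a)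
      rw [pr_cons] at h0
      simp only [or_self, if_pos rfl] at h0
      have : a ∈ pr a a v := by rw [← h0]; exact mem_cons_self
      exact (mem_pr this).1
    obtain ⟨v₁, v₂, hv, hnotv₁⟩ := mem_split_first hav
    have hind : ∀ b ∈ v₁, Ind E b a := by
      intro b hb
      by_contra hnI
      have hIab : ¬ Ind E a b := fun hI => hnI hI.symm
      have h0 := h a b hIab
      rw [pr_cons, if_pos (Or.inl rfl), hv, pr_append, pr_cons, if_pos (Or.inl rfl)] at h0
      cases hpv : pr a b v₁ with
      | nil =>
        have hbmem : b ∈ pr a b v₁ := by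
          apply List.mem_filter_of_mem hb
          simp
        rw [hpv] at hbmem
        simp at hbmem
      | cons e t =>
        rw [hpv] at h0
        have hae : a = e := by simpa using congrArg (fun l => l.head?) h0
        have hev : e ∈ v₁ := (mem_pr (by rw [hpv]; exact mem_cons_self)).1
        exact hnotv₁ (hae ▸ hev)
    have hswap : Tr E v (a :: (v₁ ++ v₂)) := by
      rw [hv]; exact swap_all hind v₂
    have hproj : ∀ a' b' : L V, ¬ Ind E a' b' → pr a' b' u' = pr a' b' (v₁ ++ v₂) := by
      intro a' b' hI'
      have h0 := h a' b' hI'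
      rw [pr_tr hI' hswap] at h0
      rw [pr_cons, pr_cons] at h0
      by_cases hpa : a = a' ∨ a = b'
      · rw [if_pos hpa, if_pos hpa] at h0
        simpa using h0
      · rwa [if_neg hpa, if_neg hpa] at h0
    exact ((ih (v₁ ++ v₂) hproj).cons a).trans' hswap.symm'

end Proj

section Pow

/-- `m`-fold concatenation. -/
def npow : ℕ → List (L V) → List (L V)
  | 0, _ => []
  | m+1, c => c ++ npow m c

@[simp] lemma npow_zero (c : List (L V)) : npow 0 c = [] := rfl

lemma npow_succ (m : ℕ) (c : List (L V)) : npow (m+1) c = c ++ npow m c := rfl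

lemma npow_succ' (m : ℕ) (c : List (L V)) : npow (m+1) c = npow m c ++ c := by
  induction m with
  | zero => simp [npow]
  | succ m ih =>
    have h2 : c ++ npow m c = npow m c ++ c := by rw [← npow_succ, ih]
    rw [npow_succ, ih, ← List.append_assoc, h2]

lemma npow_length (m : ℕ) (c : List (L V)) : (npow m c).length = m * c.length := by
  induction m with
  | zero => simp
  | succ m ih => rw [npow_succ]; simp [ih, Nat.succ_mul, Nat.add_comm]

lemma rev_npow (m : ℕ) (c : List (L V)) : (npow m c).reverse = npow m c.reverse := by
  induction m with
  | zero => simp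
  | succ m ih => rw [npow_succ, npow_succ']; simp [ih]

lemma pr_npow (a b : L V) (m : ℕ) (c : List (L V)) :
    pr a b (npow m c) = npow m (pr a b c) := by
  induction m with
  | zero => simp [pr_nil]
  | succ m ih => rw [npow_succ, npow_succ, pr_append, ih]

lemma npow_inj {m : ℕ} (hm : 1 ≤ m) {X Y : List (L V)} (h : npow m X = npow m Y) :
    X = Y := by
  have hlen : X.length = Y.length := by
    have := congrArg List.length h
    rw [npow_length, npow_length] at this
    exact Nat.eq_of_mul_eq_mul_left hm this
  obtain ⟨m, rfl⟩ : ∃ k, m = k + 1 := ⟨m - 1, by omega⟩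
  rw [npow_succ, npow_succ] at h
  have h1 : X = (X ++ npow m X).take X.length := by simp [List.take_left]
  rw [h1, h, hlen]
  simp [List.take_left]

/-- Duboc's theorem: traces have unique roots. -/
lemma duboc {m : ℕ} (hm : 1 ≤ m) {c d : List (L V)}
    (h : Tr E (npow m c) (npow m d)) : Tr E c d := by
  apply proj_char
  intro a b hab
  have h1 := pr_tr hab h
  rw [pr_npow, pr_npow] at h1
  exact npow_inj hm h1

end Pow

section Group

variable (E)

/-- The presented group. -/
abbrev G (E : V → V → Prop) := PresentedGroup (raagRels E)

/-- Image of a letter in the group. -/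
def gen (a : L V) : G E := if a.2 then PresentedGroup.of a.1 else (PresentedGroup.of a.1)⁻¹

/-- Image of a word in the group. -/
def mk (w : List (L V)) : G E := (w.map (gen E)).prod

variable {E}

@[simp] lemma mk_nil : mk E ([] : List (L V)) = 1 := rfl

lemma mk_cons (a : L V) (w : List (L V)) : mk E (a :: w) = gen E a * mk E w := by
  simp [mk]

lemma mk_append (u v : List (L V)) : mk E (u ++ v) = mk E u * mk E v := by
  simp [mk]

lemma mk_singleton (a : L V) : mk E [a] = gen E a := by simp [mk]

lemma gen_linv (a : L V) : gen E (linv a) = (gen E a)⁻¹ := by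
  cases a with | mk s b => cases b <;> simp [gen, linv]

lemma of_commute {s t : V} (hst : s ≠ t) (hE : E s t) :
    Commute (PresentedGroup.of (rels := raagRels E) s) (PresentedGroup.of t) := by
  have hr : (FreeGroup.of s * FreeGroup.of t * (FreeGroup.of s)⁻¹ * (FreeGroup.of t)⁻¹ :
      FreeGroup V) ∈ raagRels E := ⟨s, t, hst, hE, rfl⟩
  have h1 : (PresentedGroup.mk (raagRels E))
      (FreeGroup.of s * FreeGroup.of t * (FreeGroup.of s)⁻¹ * (FreeGroup.of t)⁻¹) = 1 := by
    apply (QuotientGroup.eq_one_iff _).2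
    exact Subgroup.subset_normalClosure hr
  have h2 : PresentedGroup.of (rels := raagRels E) s * PresentedGroup.of t *
      (PresentedGroup.of s)⁻¹ * (PresentedGroup.of t)⁻¹ = 1 := by
    simpa [PresentedGroup.of, map_mul, map_inv] using h1
  exact commutatorElement_eq_one_iff_commute.1 h2

lemma gen_commute {a b : L V} (h : Ind E a b) : Commute (gen E a) (gen E b) := by
  have hbase : Commute (PresentedGroup.of (rels := raagRels E) a.1) (PresentedGroup.of b.1) := by
    rcases h.2 with hE | hE
    · exact of_commute h.1 hE
    · exact (of_commute (fun hh => h.1 hh.symm) hE).symm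
  have h2 : Commute (gen E a) (PresentedGroup.of b.1) := by
    cases ha : a.2
    · simpa [gen, ha] using hbase.inv_left
    · simpa [gen, ha] using hbase
  cases hb : b.2
  · simpa [gen, hb] using h2.inv_right
  · simpa [gen, hb] using h2

lemma mk_step {w w' : List (L V)} (h : Step E w w') : mk E w = mk E w' := by
  obtain ⟨A, c, d, B, hI, h1, h2⟩ := h
  subst h1; subst h2
  rw [mk_append, mk_append, mk_cons, mk_cons, mk_cons, mk_cons]
  rw [show gen E c * (gen E d * mk E B) = gen E d * (gen E c * mk E B) from by
    rw [← mul_assoc, ← mul_assoc, (gen_commute hI).eq]]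

lemma mk_tr {w w' : List (L V)} (h : Tr E w w') : mk E w = mk E w' := by
  induction h with
  | refl => rfl
  | tail _ h2 ih => exact ih.trans (mk_step h2)

variable (E)

/-- Formal inverse of a word. -/
def invW (w : List (L V)) : List (L V) := (w.map linv).reverse

variable {E}

@[simp] lemma invW_nil : invW ([] : List (L V)) = [] := rfl

lemma invW_cons (a : L V) (w : List (L V)) : invW (a :: w) = invW w ++ [linv a] := by
  simp [invW]

lemma mk_invW (w : List (L V)) : mk E (invW w) = (mk E w)⁻¹ := by
  induction w with
  | nil => simp
  | cons a w ih =>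
    rw [invW_cons, mk_append, ih, mk_cons, mk_nil, mul_one, gen_linv, mk_cons, mul_inv_rev]

lemma gen_mul_gen_linv (x : L V) : gen E x * gen E (linv x) = 1 := by
  rw [gen_linv, mul_inv_cancel]

lemma gen_commute_mk {x : L V} {Q : List (L V)} (hq : ∀ b ∈ Q, Ind E x b) :
    Commute (gen E x) (mk E Q) := by
  induction Q with
  | nil => simp [Commute.one_right]
  | cons e Q ih =>
    rw [mk_cons]
    exact (gen_commute (hq e (mem_cons_self))).mul_right
      (ih (fun b hb => hq b (mem_cons_of_mem _ hb)))

/-- Every word is equal in the group to a reduced word. -/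
lemma mk_reduce_aux : ∀ (n : ℕ) (w : List (L V)), w.length ≤ n →
    ∃ w', Red E w' ∧ mk E w' = mk E w := by
  intro n
  induction n with
  | zero =>
    intro w hw
    have : w = [] := List.eq_nil_of_length_eq_zero (Nat.le_zero.1 hw)
    subst this
    exact ⟨[], red_nil, rfl⟩
  | succ n ih =>
    intro w hn
    by_cases hw : Red E w
    · exact ⟨w, hw, rfl⟩
    · have hc : HC E w := not_not.1 hw
      obtain ⟨P, Q, R, x, hd, hq⟩ := hc_decomp hc
      have hlen : (P ++ Q ++ R).length ≤ n := by
        have := congrArg List.length hd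
        simp at this ⊢
        omega
      obtain ⟨w', hred, heq⟩ := ih (P ++ Q ++ R) hlen
      refine ⟨w', hred, heq.trans ?_⟩
      have key : mk E (P ++ x :: (Q ++ linv x :: R)) = mk E (P ++ Q ++ R) := by
        rw [mk_append, mk_cons, mk_append, mk_cons]
        have h5 : gen E x * (mk E Q * (gen E (linv x) * mk E R)) = mk E Q * mk E R := by
          rw [← mul_assoc, (gen_commute_mk hq).eq, mul_assoc, ← mul_assoc (gen E x),
            gen_mul_gen_linv, one_mul]
        rw [h5, mk_append, mk_append, mul_assoc]
      rw [hd]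
      exact key.symm

/-- Every group element is represented by a reduced word. -/
lemma mk_surjective (g : G E) : ∃ w, Red E w ∧ mk E w = g := by
  have h2 : ∃ w, mk E w = g := by
    let S : Subgroup (G E) :=
      { carrier := {g | ∃ w, mk E w = g}
        one_mem' := ⟨[], rfl⟩
        mul_mem' := by
          rintro a b ⟨u, rfl⟩ ⟨v, rfl⟩
          exact ⟨u ++ v, mk_append u v⟩
        inv_mem' := by
          rintro a ⟨u, rfl⟩
          exact ⟨invW u, mk_invW u⟩ }
    exact PresentedGroup.generated_by _ S (fun j => ⟨[(j, true)], by simp [mk, gen]⟩) g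
  obtain ⟨w, hw⟩ := h2
  obtain ⟨w', hred, heq⟩ := mk_reduce_aux w.length w le_rfl
  exact ⟨w', hred, heq.trans hw⟩

end Group

section VdW

variable (E)

/-- Setoid of shuffle equivalence. -/
def trSetoid : Setoid (List (L V)) :=
  ⟨Tr E, ⟨tr_refl, Tr.symm', Tr.trans'⟩⟩

/-- Traces. -/
def T := Quotient (trSetoid E)

/-- Class of a word. -/
def qm (w : List (L V)) : T E := Quotient.mk (trSetoid E) w

/-- Reduced traces. -/
def RedT : T E → Prop :=
  Quotient.lift (Red E) (fun w w' h =>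
    propext ⟨fun hr => red_tr h hr, fun hr => red_tr (Tr.symm' h) hr⟩)

variable {E}

lemma qm_sound {w w' : List (L V)} (h : Tr E w w') : qm E w = qm E w' :=
  Quotient.sound h

lemma qm_exact {w w' : List (L V)} (h : qm E w = qm E w') : Tr E w w' :=
  Quotient.exact h

lemma redT_qm {w : List (L V)} : RedT E (qm E w) ↔ Red E w := Iff.rfl

open scoped Classical in
/-- The action of a letter on words. -/
noncomputable def sigF (a : L V) (w : List (L V)) : T E :=
  if h : ∃ u, Tr E w (linv a :: u) then qm E h.choose else qm E (a :: w)

lemma sigF_respects (a : L V) {w w' : List (L V)} (h : Tr E w w') :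
    sigF a w = (sigF a w' : T E) := by
  by_cases h1 : ∃ u, Tr E w (linv a :: u)
  · have h2 : ∃ u, Tr E w' (linv a :: u) := ⟨h1.choose, h.symm'.trans' h1.choose_spec⟩
    rw [sigF, dif_pos h1, sigF, dif_pos h2]
    apply qm_sound
    exact lcancel ((h1.choose_spec.symm'.trans' h).trans' h2.choose_spec)
  · have h2 : ¬ ∃ u, Tr E w' (linv a :: u) := fun ⟨u, hu⟩ => h1 ⟨u, h.trans' hu⟩
    rw [sigF, dif_neg h1, sigF, dif_neg h2]
    exact qm_sound (h.cons a)

/-- The action of a letter on traces. -/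
noncomputable def sigT (a : L V) : T E → T E :=
  Quotient.lift (sigF a) (fun _ _ h => sigF_respects a h)

lemma sigT_pos {a : L V} {w u : List (L V)} (h : Tr E w (linv a :: u)) :
    sigT a (qm E w) = qm E u := by
  have h1 : ∃ u, Tr E w (linv a :: u) := ⟨u, h⟩
  show sigF a w = qm E u
  rw [sigF, dif_pos h1]
  exact qm_sound (lcancel (h1.choose_spec.symm'.trans' h))

lemma sigT_neg {a : L V} {w : List (L V)} (h : ¬ ∃ u, Tr E w (linv a :: u)) :
    sigT a (qm E w) = qm E (a :: w) := by
  show sigF a w = qm E (a :: w)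
  rw [sigF, dif_neg h]

lemma sigT_red {a : L V} {t : T E} (ht : RedT E t) : RedT E (sigT a t) := by
  induction t using Quotient.ind with | _ w =>
  have hw : Red E w := ht
  by_cases h1 : ∃ u, Tr E w (linv a :: u)
  · obtain ⟨u, hu⟩ := h1
    rw [show (Quotient.mk (trSetoid E) w) = qm E w from rfl, sigT_pos hu]
    exact red_cons (red_tr hu hw)
  · rw [show (Quotient.mk (trSetoid E) w) = qm E w from rfl, sigT_neg h1]
    exact cons_red hw h1

lemma sigT_inv {a : L V} {t : T E} (ht : RedT E t) : sigT a (sigT (linv a) t) = t := by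
  induction t using Quotient.ind with | _ w =>
  have hw : Red E w := ht
  rw [show (Quotient.mk (trSetoid E) w) = qm E w from rfl]
  by_cases h1 : ∃ u, Tr E w (a :: u)
  · obtain ⟨u, hu⟩ := h1
    have hu' : Tr E w (linv (linv a) :: u) := by rwa [linv_linv]
    rw [sigT_pos hu']
    have h2 : ¬ ∃ v, Tr E u (linv a :: v) := by
      rintro ⟨v, hv⟩
      exact hw ⟨a, [], v, by simpa using hu.trans' (hv.cons a)⟩
    rw [sigT_neg h2]
    exact (qm_sound hu).symm
  · have h1' : ¬ ∃ u, Tr E w (linv (linv a) :: u) := by rwa [linv_linv]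
    rw [sigT_neg h1']
    have h2 : Tr E (linv a :: w) (linv a :: w) := tr_refl _
    rw [sigT_pos h2]

lemma sigT_comm_aux {a b : L V} (hI : Ind E a b) {w : List (L V)}
    (hb : ∃ u, Tr E w (linv b :: u)) (ha : ¬ ∃ u, Tr E w (linv a :: u)) :
    sigT a (sigT b (qm E w)) = sigT b (sigT a (qm E w)) := by
  obtain ⟨u, hu⟩ := hb
  rw [sigT_pos hu]
  have h2 : ¬ ∃ v, Tr E u (linv a :: v) := by
    rintro ⟨v, hv⟩
    apply ha
    refine ⟨linv b :: v, ?_⟩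
    refine (hu.trans' (hv.cons (linv b))).trans' (tr_of_step ⟨[], linv b, linv a, v, ?_, rfl, rfl⟩)
    exact hI.symm
  rw [sigT_neg h2, sigT_neg ha]
  have h3 : Tr E (a :: w) (linv b :: (a :: u)) := by
    refine ((hu.cons a).trans' (tr_of_step ⟨[], a, linv b, u, ?_, rfl, rfl⟩))
    exact hI
  rw [sigT_pos h3]

lemma sigT_comm {a b : L V} (hI : Ind E a b) (t : T E) :
    sigT a (sigT b t) = sigT b (sigT a t) := by
  induction t using Quotient.ind with | _ w =>
  rw [show (Quotient.mk (trSetoid E) w) = qm E w from rfl]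
  by_cases hb : ∃ u, Tr E w (linv b :: u) <;> by_cases ha : ∃ u, Tr E w (linv a :: u)
  · -- both
    obtain ⟨ua, hua⟩ := ha
    obtain ⟨ub, hub⟩ := hb
    have h3 : Tr E (linv a :: ua) (linv b :: ub) := hua.symm'.trans' hub
    have hne : linv a ≠ linv b := ne_of_fst_ne (by simpa using hI.1)
    obtain ⟨hI2, z, hz1, hz2⟩ := levi1 h3 hne
    rw [sigT_pos hub, sigT_pos hua, sigT_pos hz2, sigT_pos hz1]
  · exact sigT_comm_aux hI hb ha
  · exact (sigT_comm_aux hI.symm ha hb).symm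
  · rw [sigT_neg hb, sigT_neg ha]
    have hba : b ≠ linv a := ne_of_fst_ne (by simpa using fun hh => hI.1 hh.symm)
    have hab : a ≠ linv b := ne_of_fst_ne (by simpa using hI.1)
    have hxa : ¬ ∃ u, Tr E (b :: w) (linv a :: u) := by
      rintro ⟨u, hu⟩
      obtain ⟨-, z, hz1, -⟩ := levi1 hu hba
      exact ha ⟨z, hz1⟩
    have hxb : ¬ ∃ u, Tr E (a :: w) (linv b :: u) := by
      rintro ⟨u, hu⟩
      obtain ⟨-, z, hz1, -⟩ := levi1 hu hab
      exact hb ⟨z, hz1⟩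
    rw [sigT_neg hxa, sigT_neg hxb]
    exact qm_sound (tr_of_step ⟨[], a, b, w, hI, rfl, rfl⟩)

variable (E)

/-- Reduced traces as a type. -/
def RType := {t : T E // RedT E t}

variable {E}

/-- Letter action on reduced traces. -/
noncomputable def sigR (a : L V) : RType E → RType E := fun r => ⟨sigT a r.1, sigT_red r.2⟩

/-- Letter action as a permutation of reduced traces. -/
noncomputable def sigP (a : L V) : Equiv.Perm (RType E) where
  toFun := sigR a
  invFun := sigR (linv a)
  left_inv := fun r => Subtype.ext (by
    show sigT (linv a) (sigT a r.1) = r.1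
    have h := sigT_inv (a := linv a) (t := r.1) r.2
    rwa [linv_linv] at h)
  right_inv := fun r => Subtype.ext (sigT_inv r.2)

noncomputable def fperm : V → Equiv.Perm (RType E) := fun s => sigP (s, true)

lemma fperm_rels : ∀ r ∈ raagRels E, FreeGroup.lift (fperm (E := E)) r = 1 := by
  rintro r ⟨s, t, hst, hE, rfl⟩
  have hc : Commute (fperm (E := E) s) (fperm (E := E) t) := by
    refine Equiv.ext fun r => ?_
    rw [Equiv.Perm.mul_apply, Equiv.Perm.mul_apply]
    show sigR (s, true) (sigR (t, true) r) = sigR (t, true) (sigR (s, true) r)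
    exact Subtype.ext (sigT_comm (a := (s, true)) (b := (t, true)) ⟨hst, Or.inl hE⟩ r.1)
  have h2 := commutatorElement_eq_one_iff_commute.2 hc
  simpa [commutatorElement_def, map_mul, map_inv, FreeGroup.lift_apply_of] using h2

/-- The canonical action of the RAAG on reduced traces. -/
noncomputable def Phi : G E →* Equiv.Perm (RType E) :=
  PresentedGroup.toGroup (f := fperm) fperm_rels

lemma Phi_gen (a : L V) (r : RType E) : Phi (gen E a) r = sigR a r := by
  cases a with | mk s bb =>
  cases bb
  · have h1 : gen E (s, false) = (PresentedGroup.of s)⁻¹ := rfl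
    rw [h1, map_inv]
    rw [show Phi (PresentedGroup.of s) = fperm (E := E) s from PresentedGroup.toGroup.of _]
    rfl
  · have h1 : gen E (s, true) = PresentedGroup.of s := rfl
    rw [h1]
    rw [show Phi (PresentedGroup.of s) = fperm (E := E) s from PresentedGroup.toGroup.of _]
    rfl

/-- The empty reduced trace. -/
noncomputable def nilR : RType E := ⟨qm E [], red_nil⟩

lemma eval : ∀ (w : List (L V)), Red E w → (Phi (mk E w) (nilR : RType E)).1 = qm E w := by
  intro w
  induction w with
  | nil => intro _; rw [mk_nil, map_one]; rfl
  | cons a t ih =>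
    intro hw
    have hat : Red E t := red_cons hw
    rw [mk_cons, map_mul, Equiv.Perm.mul_apply, Phi_gen]
    have hnot : ¬ ∃ u, Tr E t (linv a :: u) := by
      rintro ⟨u, hu⟩
      exact hw ⟨a, [], u, by simpa using hu.cons a⟩
    show sigT a (Phi (mk E t) (nilR : RType E)).1 = qm E (a :: t)
    rw [ih hat, sigT_neg hnot]

/-- Uniqueness of reduced representatives. -/
lemma unique_red {u v : List (L V)} (hu : Red E u) (hv : Red E v)
    (h : mk E u = mk E v) : Tr E u v := by
  have h1 := congrArg (fun g : G E => (Phi g (nilR : RType E)).1) h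
  rw [eval u hu, eval v hv] at h1
  exact qm_exact h1

end VdW

section Cyc

variable (E)

/-- A word is cyclically reduced in the strong sense: no letter can be split off
both ends. -/
def NoEnds (c : List (L V)) : Prop := ¬ ∃ (a : L V) (z : List (L V)), Tr E c (a :: (z ++ [linv a]))

variable {E}

/-- Cyclic reduction exists. -/
lemma cyc_exist_aux : ∀ (n : ℕ) (w : List (L V)), w.length ≤ n → Red E w →
    ∃ h c, NoEnds E c ∧ Tr E w (h ++ c ++ invW h) := by
  intro n
  induction n with
  | zero =>
    intro w hn _
    refine ⟨[], w, ?_, by simpa using tr_refl w⟩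
    rintro ⟨a, z, htr⟩
    have := htr.length_eq
    simp at this
    omega
  | succ n ih =>
    intro w hn hred
    by_cases hne : ∃ (a : L V) (z : List (L V)), Tr E w (a :: (z ++ [linv a]))
    · obtain ⟨a, z, htr⟩ := hne
      have hz : Red E z := by
        have h1 : Red E (a :: (z ++ [linv a])) := red_tr htr hred
        exact red_append_left (red_cons h1)
      have hlen : z.length ≤ n := by
        have := htr.length_eq
        simp at this
        omega
      obtain ⟨h', c, hC, htr'⟩ := ih z hlen hz
      refine ⟨a :: h', c, hC, ?_⟩
      have h2 : Tr E (a :: (z ++ [linv a])) (a :: ((h' ++ c ++ invW h') ++ [linv a])) :=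
        (htr'.append_right [linv a]).cons a
      refine (htr.trans' h2).trans' ?_
      rw [invW_cons]
      simp [tr_refl]
    · exact ⟨[], w, hne, by simpa using tr_refl w⟩

lemma cyc_exist {w : List (L V)} (hred : Red E w) :
    ∃ h c, NoEnds E c ∧ Tr E w (h ++ c ++ invW h) :=
  cyc_exist_aux w.length w le_rfl hred

/-- Locating a marked letter with independent prefix inside a power followed by a tail. -/
lemma front_pow : ∀ (m : ℕ) (t p q : List (L V)) (x : L V) {c : List (L V)},
    npow m c ++ t = p ++ x :: q → (∀ b ∈ p, Ind E b x) →
    (∃ c₁ c₂, c = c₁ ++ x :: c₂ ∧ ∀ b ∈ c₁, Ind E b x) ∨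
    ((∀ b ∈ c, 1 ≤ m → Ind E b x) ∧ ∃ s₁ s₂, t = s₁ ++ x :: s₂ ∧ ∀ b ∈ s₁, Ind E b x) := by
  intro m
  induction m with
  | zero =>
    intro t p q x c h hp
    exact Or.inr ⟨fun b _ h1 => by omega, p, q, by simpa using h, hp⟩
  | succ m ih =>
    intro t p q x c h hp
    rw [npow_succ, List.append_assoc] at h
    rcases List.append_eq_append_iff.1 h with ⟨a', hp', hrest⟩ | ⟨c', hc', hq'⟩
    · -- p = c ++ a' : the letter is beyond the first copy
      rcases ih t a' q x hrest (fun b hb => hp b (by rw [hp']; simp [hb])) with hL | ⟨_, hR⟩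
      · exact Or.inl hL
      · exact Or.inr ⟨fun b hb _ => hp b (by rw [hp']; simp [hb]), hR⟩
    · match c', hq' with
      | [], hq' =>
        have hpc : c = p := by simpa using hc'
        rcases ih t [] q x (by simpa using hq'.symm) (by simp) with hL | ⟨_, hR⟩
        · exact Or.inl hL
        · exact Or.inr ⟨fun b hb _ => hp b (hpc ▸ hb), hR⟩
      | y :: c'', hq' =>
        have hxy : x = y := by simpa using congrArg (fun l => l.head?) hq'
        subst hxy
        exact Or.inl ⟨p, c'', by simpa using hc', hp⟩

/-- Splitting a marked letter with independent prefix across a concatenation. -/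
lemma front_split {A B p q : List (L V)} {x : L V}
    (h : A ++ B = p ++ x :: q) (hp : ∀ b ∈ p, Ind E b x) :
    (∃ A₁ A₂, A = A₁ ++ x :: A₂ ∧ ∀ b ∈ A₁, Ind E b x) ∨
    ((∀ b ∈ A, Ind E b x) ∧ ∃ B₁ B₂, B = B₁ ++ x :: B₂ ∧ ∀ b ∈ B₁, Ind E b x) := by
  have h1 : npow 1 A ++ B = p ++ x :: q := by simpa [npow] using h
  rcases front_pow 1 B p q x h1 hp with hL | ⟨hA, hR⟩
  · exact Or.inl hL
  · exact Or.inr ⟨fun b hb => hA b hb le_rfl, hR⟩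

lemma linv_ne (a : L V) : linv a ≠ a := by
  cases a with | mk s b => cases b <;> simp [linv]

lemma front_extract {u u' : List (L V)} {x : L V} (h : Tr E u (x :: u')) :
    ∃ p q, u = p ++ x :: q ∧ ∀ b ∈ p, Ind E b x := by
  obtain ⟨p, q, hw, hp, -⟩ := firstocc h.symm'
  exact ⟨p, q, hw, hp⟩

lemma end_extract {u u' : List (L V)} {x : L V} (h : Tr E u (u' ++ [x])) :
    ∃ p q, u = p ++ x :: q ∧ ∀ b ∈ q, Ind E b x := by
  have hrev : Tr E (x :: u'.reverse) u.reverse := by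
    have := h.reverse
    simpa using this.symm'
  obtain ⟨p, q, hw, hp, -⟩ := firstocc hrev
  refine ⟨q.reverse, p.reverse, ?_, fun b hb => hp b (by simpa using hb)⟩
  have := congrArg List.reverse hw
  simpa using this

lemma end_split {A B p q : List (L V)} {x : L V}
    (h : A ++ B = p ++ x :: q) (hq : ∀ b ∈ q, Ind E b x) :
    (∃ B₁ B₂, B = B₁ ++ x :: B₂ ∧ ∀ b ∈ B₂, Ind E b x) ∨
    ((∀ b ∈ B, Ind E b x) ∧ ∃ A₁ A₂, A = A₁ ++ x :: A₂ ∧ ∀ b ∈ A₂, Ind E b x) := by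
  have h1 : B.reverse ++ A.reverse = q.reverse ++ x :: p.reverse := by
    have := congrArg List.reverse h
    simpa using this
  rcases front_split h1 (fun b hb => hq b (by simpa using hb)) with
    ⟨B₁, B₂, hB, hb⟩ | ⟨hBall, A₁, A₂, hA, ha⟩
  · left
    refine ⟨B₂.reverse, B₁.reverse, ?_, fun b hb' => hb b (by simpa using hb')⟩
    have := congrArg List.reverse hB
    simpa using this
  · right
    refine ⟨fun b hb' => hBall b (by simpa using hb'), A₂.reverse, A₁.reverse, ?_,
      fun b hb' => ha b (by simpa using hb')⟩
    have := congrArg List.reverse hA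
    simpa using this

/-- Powers of a cyclically reduced word have no conjugating ends either. -/
lemma noends_pow {c : List (L V)} (hC : NoEnds E c) (m : ℕ) : NoEnds E (npow m c) := by
  rintro ⟨a, z, htr⟩
  obtain ⟨p, q, hw, hp⟩ := front_extract htr
  rcases front_pow m [] p q a (by simpa using hw) hp with ⟨c₁, c₂, hc, h1⟩ |
    ⟨-, s₁, s₂, hs, -⟩
  swap
  · simp at hs
  have hfront : Tr E c (a :: (c₁ ++ c₂)) := by rw [hc]; exact swap_all h1 c₂
  have hrev : Tr E (npow m c.reverse) ((linv a) :: (z.reverse ++ [a])) := by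
    have h2 := htr.reverse
    rw [rev_npow] at h2
    simpa using h2
  obtain ⟨p', q', hw', hp'⟩ := front_extract hrev
  rcases front_pow m [] p' q' (linv a) (by simpa using hw') hp' with ⟨e₁, e₂, he, h2⟩ |
    ⟨-, s₁, s₂, hs, -⟩
  swap
  · simp at hs
  have hcr : c = e₂.reverse ++ linv a :: e₁.reverse := by
    have := congrArg List.reverse he
    simpa using this
  have hend : Tr E c ((e₂.reverse ++ e₁.reverse) ++ [linv a]) := by
    rw [hcr]
    exact swap_all_right (fun b hb => h2 b (by simpa using hb)) e₂.reverse
  obtain ⟨z', hz'⟩ := both_ends hfront hend (fun hh => linv_ne a hh.symm)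
  exact hC ⟨a, z', hz'⟩

/-- Powers of cyclically reduced words, conjugated, stay reduced. -/
lemma nfpow {h c : List (L V)} (hR : Red E (h ++ c ++ invW h)) (hC : NoEnds E c) :
    ∀ m, 1 ≤ m → Red E (h ++ npow m c ++ invW h) := by
  intro m
  induction m with
  | zero => omega
  | succ m ih =>
    intro _
    by_cases hm : m = 0
    · subst hm
      have : npow 1 c = c := by simp [npow]
      rwa [this]
    · have hm1 : 1 ≤ m := by omega
      have hv : Red E (npow m c ++ invW h) := by
        have := ih hm1
        rw [List.append_assoc] at this
        exact red_append_right this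
      have hu : Red E (h ++ c) := red_append_left hR
      by_contra hHC
      have hc2 : HC E ((h ++ c) ++ (npow m c ++ invW h)) := by
        have heq : (h ++ c) ++ (npow m c ++ invW h) = h ++ npow (m+1) c ++ invW h := by
          rw [npow_succ]; simp
        rw [heq]
        exact not_not.1 hHC
      obtain ⟨x, u', v', hxu, hxv⟩ := split_hc hu hv hc2
      -- end analysis on h ++ c
      obtain ⟨p, q, hpq, hq⟩ := end_extract hxu
      -- front analysis on npow m c ++ invW h
      obtain ⟨p', q', hv', hp'⟩ := front_extract hxv
      rcases end_split hpq hq with ⟨c₁, c₂, hcdec, hc2'⟩ | ⟨hcall, h₁, h₂, hhdec, hh2⟩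
      · -- x sits in c with independent suffix
        rcases front_pow m (invW h) p' q' (linv x) hv' hp' with
          ⟨c₁', c₂', hcdec', hc1'⟩ | ⟨hcall', s₁, s₂, hsdec, hs1⟩
        · -- linv x also at the front of c : contradiction with NoEnds
          have hfront : Tr E c (linv x :: (c₁' ++ c₂')) := by
            rw [hcdec']; exact swap_all hc1' c₂'
          have hend : Tr E c ((c₁ ++ c₂) ++ [x]) := by
            rw [hcdec]; exact swap_all_right hc2' c₁
          obtain ⟨z', hz'⟩ := both_ends hfront hend (linv_ne x)
          refine hC ⟨linv x, z', ?_⟩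
          rwa [linv_linv]
        · -- c is independent of x but contains x
          have hxc : x ∈ c := by rw [hcdec]; simp
          have := hcall' x hxc hm1
          exact ind_irrefl x ((ind_linv_right).1 this)
      · -- x sits in h
        rcases front_pow m (invW h) p' q' (linv x) hv' hp' with
          ⟨c₁', c₂', hcdec', hc1'⟩ | ⟨hcall', s₁, s₂, hsdec, hs1⟩
        · -- linv x in c but c independent of x
          have hxc : linv x ∈ c := by rw [hcdec']; simp
          exact ind_irrefl x (((ind_linv_right).1 (hcall _ hxc)).symm : Ind E x x)
        · -- both in h-parts : contradiction with reducedness of h ++ c ++ invW h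
          apply hR
          apply hcl_hc
          refine ⟨h₁, h₂ ++ c ++ s₁, s₂, x, ?_, ?_⟩
          · rw [hsdec, hhdec]
            simp
          · intro b hb
            simp only [mem_append] at hb
            rcases hb with (hb | hb) | hb
            · exact (hh2 b hb).symm
            · exact (hcall b hb).symm
            · exact ((ind_linv_right).1 (hs1 b hb)).symm

end Cyc

section Main

lemma mk_npow (m : ℕ) (c : List (L V)) : mk E (npow m c) = (mk E c) ^ m := by
  induction m with
  | zero => simp
  | succ m ih => rw [npow_succ, mk_append, ih, pow_succ, (Commute.self_pow _ _).eq]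

/-- Unique roots in a right-angled Artin group. -/
theorem pow_inj {x y : G E} {m : ℕ} (hm : 1 ≤ m) (h : x ^ m = y ^ m) : x = y := by
  obtain ⟨w, hwred, rfl⟩ := mk_surjective x
  obtain ⟨h₀, c, hC, htr⟩ := cyc_exist hwred
  have hhc_red : Red E (h₀ ++ c ++ invW h₀) := red_tr htr hwred
  have hcred : Red E c := red_append_right (red_append_left hhc_red)
  have hx : mk E w = mk E h₀ * mk E c * (mk E h₀)⁻¹ := by
    rw [mk_tr htr, mk_append, mk_append, mk_invW]
  set g := mk E h₀ with hg
  set y₁ := g⁻¹ * y * g with hy₁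
  have hy : y = g * y₁ * g⁻¹ := by rw [hy₁]; group
  have hconj : y₁ ^ m = (mk E c) ^ m := by
    have h1 : g⁻¹ * (mk E w) * g = mk E c := by rw [hx]; group
    have h2 : y₁ = g⁻¹ * y * (g⁻¹)⁻¹ := by rw [hy₁, inv_inv]
    have h3 : g⁻¹ * mk E w * (g⁻¹)⁻¹ = mk E c := by rw [inv_inv]; exact h1
    rw [h2, conj_pow, ← h, ← conj_pow, h3]
  obtain ⟨u, hured, hu⟩ := mk_surjective y₁
  obtain ⟨h₂, d, hD, htr₂⟩ := cyc_exist hured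
  have h2red : Red E (h₂ ++ d ++ invW h₂) := red_tr htr₂ hured
  have hA_red : Red E (npow m c) := by
    have h4 : Red E (([] : List (L V)) ++ c ++ invW []) := by simpa using hcred
    have := nfpow h4 hC m hm
    simpa using this
  have hB_red : Red E (h₂ ++ npow m d ++ invW h₂) := nfpow h2red hD m hm
  have hmkB : mk E (h₂ ++ npow m d ++ invW h₂) = y₁ ^ m := by
    have hy₁d : y₁ = mk E h₂ * mk E d * (mk E h₂)⁻¹ := by
      rw [← hu, mk_tr htr₂, mk_append, mk_append, mk_invW]
    rw [mk_append, mk_append, mk_invW, mk_npow, hy₁d, conj_pow]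
  have hAB : Tr E (npow m c) (h₂ ++ npow m d ++ invW h₂) := by
    apply unique_red hA_red hB_red
    rw [mk_npow, hmkB, hconj]
  have hCm : NoEnds E (npow m c) := noends_pow hC m
  have hh2nil : h₂ = [] := by
    cases h₂ with
    | nil => rfl
    | cons b h₂' =>
      exfalso
      apply hCm
      refine ⟨b, h₂' ++ npow m d ++ invW h₂', ?_⟩
      have heq : (b :: h₂') ++ npow m d ++ invW (b :: h₂') =
          b :: ((h₂' ++ npow m d ++ invW h₂') ++ [linv b]) := by
        rw [invW_cons]; simp
      rw [← heq]
      exact hAB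
  subst hh2nil
  have hAB' : Tr E (npow m c) (npow m d) := by simpa using hAB
  have hcd : Tr E c d := duboc hm hAB'
  have hy₁c : y₁ = mk E c := by
    rw [← hu, mk_tr htr₂]
    simpa using (mk_tr hcd).symm
  rw [hy, hy₁c, ← hx]

/-- Centralizers of powers. -/
theorem cent_pow (w : G E) (m : ℤ) (hm : m ≠ 0) :
    Subgroup.centralizer {w ^ m} = Subgroup.centralizer {w} := by
  ext g
  rw [Subgroup.mem_centralizer_iff, Subgroup.mem_centralizer_iff]
  simp only [Set.mem_singleton_iff, forall_eq]
  constructor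
  · intro hcomm
    -- hcomm : w ^ m * g = g * w ^ m
    set n := m.natAbs with hn
    have hn1 : 1 ≤ n := Int.natAbs_pos.2 hm
    have hcn : w ^ n * g = g * w ^ n := by
      rcases Int.natAbs_eq m with hmn | hmn
      · have : w ^ m = w ^ n := by rw [hmn, zpow_natCast]
        rwa [this] at hcomm
      · have h1 : w ^ m = (w ^ n)⁻¹ := by rw [hmn, zpow_neg, zpow_natCast]
        rw [h1] at hcomm
        have h2 : Commute ((w ^ n)⁻¹) g := hcomm
        have := h2.inv_left
        rw [inv_inv] at this
        exact this
    have hkey : (g * w * g⁻¹) ^ n = w ^ n := by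
      rw [conj_pow]
      rw [show g * w ^ n * g⁻¹ = w ^ n from by
        rw [← hcn]; group]
    have := pow_inj hn1 hkey
    have h3 : g * w = w * g := by
      have h4 := congrArg (fun z => z * g) this
      simpa [mul_assoc] using h4
    exact h3.symm
  · intro hcomm
    have hc : Commute w g := hcomm
    exact (hc.symm.zpow_right m).symm.eq

end Main
end RAAG

/-- Lemma 8.2 and Corollary 8.3: in a right-angled Artin group,
`xᵐ = yᵐ` with `m ≥ 1` implies `x = y`; consequently `Z_G(wᵐ) = Z_G(w)` for
every `w` and nonzero integer `m`. -/
theorem raag_pow_injective {V : Type*} (E : V → V → Prop) :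
    (∀ x y : PresentedGroup (raagRels E), ∀ m : ℕ, 1 ≤ m → x ^ m = y ^ m → x = y) ∧
    (∀ w : PresentedGroup (raagRels E), ∀ m : ℤ, m ≠ 0 →
      Subgroup.centralizer {w ^ m} = Subgroup.centralizer {w}) := by
  constructor
  · intro x y m hm h
    exact RAAG.pow_inj hm h
  · intro w m hm
    exact RAAG.cent_pow w m hm

end ArtinMedian
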